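/- arXiv:1902.08998 — 2 statements merged into one kernel-verified Lean document; each statement's English description precedes it below -/
import Mathlib

section
/- Suppose real numbers $\Gamma_1 \leq \cdots \leq \Gamma_k \leq \Gamma_{k+1}$ and $c_1, \ldots, c_k \in [0,1]$ satisfy $\Gamma_{k+1}\left(A r^n - (2\pi)^n \sum_{j=1}^k c_j\right) \leq \frac{n}{n+2p} A r^{n+2p} - (2\pi)^n \sum_{j=1}^k \Gamma_j c_j$ for some $r$ with $A r^n > k(2\pi)^n$, where $A > 0$ and all $\Gamma_j \geq 0$. Then $\sum_{j=1}^k \Gamma_j \leq \frac{n A r^{n+2p}}{(n+2p)(2\pi)^n}$. -/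
/-- Key algebraic step in the Kröger-type averaging argument: if
`Γ₁ ≤ ⋯ ≤ Γ_k ≤ Γ_{k+1}` are nonnegative, `c_j ∈ [0,1]`, `A rⁿ > k(2π)ⁿ`, and
`Γ_{k+1} (A rⁿ - (2π)ⁿ ∑ c_j) ≤ (n/(n+2p)) A r^{n+2p} - (2π)ⁿ ∑ Γ_j c_j`,
then `∑_{j=1}^k Γ_j ≤ n A r^{n+2p} / ((n+2p)(2π)ⁿ)`. -/
theorem kroger_averaging_step (n p k : ℕ) (hn : 0 < n) (hp : 0 < p) (hk : 1 ≤ k)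
    (A r : ℝ) (hA : 0 < A) (hr : 0 < r)
    (hrange : k * (2 * Real.pi) ^ n < A * r ^ n)
    (Γ : ℕ → ℝ) (hΓnonneg : ∀ j, 0 ≤ Γ j)
    (hΓmono : ∀ i j, i ≤ j → j ≤ k + 1 → Γ i ≤ Γ j)
    (c : ℕ → ℝ) (hc0 : ∀ j, 0 ≤ c j) (hc1 : ∀ j, c j ≤ 1)
    (hineq : Γ (k + 1) * (A * r ^ n - (2 * Real.pi) ^ n * ∑ j ∈ Finset.Icc 1 k, c j) ≤
      (n : ℝ) / ((n : ℝ) + 2 * p) * A * r ^ (n + 2 * p) -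
        (2 * Real.pi) ^ n * ∑ j ∈ Finset.Icc 1 k, Γ j * c j) :
    ∑ j ∈ Finset.Icc 1 k, Γ j ≤
      (n : ℝ) * A * r ^ (n + 2 * p) / (((n : ℝ) + 2 * p) * (2 * Real.pi) ^ n) := by
  have hBpos : (0:ℝ) < (2 * Real.pi) ^ n := by positivity
  have hG : 0 ≤ Γ (k + 1) := hΓnonneg _
  have hsum : ∑ j ∈ Finset.Icc 1 k, Γ j ≤
      (∑ j ∈ Finset.Icc 1 k, Γ j * c j) +
        Γ (k + 1) * ((k : ℝ) - ∑ j ∈ Finset.Icc 1 k, c j) := by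
    have h : ∀ j ∈ Finset.Icc 1 k, Γ j ≤ Γ j * c j + Γ (k + 1) * (1 - c j) := by
      intro j hj
      simp only [Finset.mem_Icc] at hj
      have h1 : Γ j ≤ Γ (k + 1) := hΓmono j (k + 1) (by omega) le_rfl
      nlinarith [hc0 j, hc1 j, hΓnonneg j]
    calc ∑ j ∈ Finset.Icc 1 k, Γ j
        ≤ ∑ j ∈ Finset.Icc 1 k, (Γ j * c j + Γ (k + 1) * (1 - c j)) :=
          Finset.sum_le_sum h
      _ = (∑ j ∈ Finset.Icc 1 k, Γ j * c j) +
            Γ (k + 1) * ((k : ℝ) - ∑ j ∈ Finset.Icc 1 k, c j) := by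
          rw [Finset.sum_add_distrib, ← Finset.mul_sum, Finset.sum_sub_distrib,
            Finset.sum_const, Nat.card_Icc]
          simp [mul_sub]
  have hGk : 0 ≤ Γ (k + 1) * (A * r ^ n - (k : ℝ) * (2 * Real.pi) ^ n) :=
    mul_nonneg hG (by linarith)
  have key : (2 * Real.pi) ^ n * ∑ j ∈ Finset.Icc 1 k, Γ j ≤
      (n : ℝ) / ((n : ℝ) + 2 * p) * A * r ^ (n + 2 * p) := by
    nlinarith [mul_le_mul_of_nonneg_left hsum hBpos.le]
  have hnp : (0:ℝ) < (n : ℝ) + 2 * p := by positivity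
  rw [le_div_iff₀ (by positivity)]
  have : (n : ℝ) / ((n : ℝ) + 2 * p) * A * r ^ (n + 2 * p) * ((n : ℝ) + 2 * p)
      = (n : ℝ) * A * r ^ (n + 2 * p) := by
    field_simp
  nlinarith [mul_le_mul_of_nonneg_right key hnp.le]
end

section
/- Let $\phi_1, \ldots, \phi_k$ be an orthonormal set in $L^2(\Omega)$ for a bounded domain $\Omega \subset \mathbb{R}^n$, extend each $\phi_j$ by zero to $\mathbb{R}^n$, and let $\hat\phi_j$ denote the Fourier transform. Let $h_z(x) = e^{ix\cdot z}$ and $\rho(z,y) = h_z(y) - (2\pi)^{n/2}\sum_{j=1}^k \phi_j(y)\overline{\hat\phi_j(-z)}$ (the projection remainder). Then for every $r > 0$: $\int_{B_r}\int_\Omega |\rho(z,y)|^2\, dy\, dz = \omega_n |\Omega| r^n - (2\pi)^n \sum_{j=1}^k \int_{B_r} |\hat\phi_j(z)|^2\, dz$, where $B_r$ is the ball of radius $r$ centered at the origin in $\mathbb{R}^n$. -/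
open MeasureTheory

/-- The Fourier transform (in the paper's normalization) of a real-valued function
supported in `Ω ⊂ ℝⁿ`: `φ̂(z) = (2π)^{-n/2} ∫_Ω φ(x) e^{i x·z} dx`. -/
noncomputable def fourierOn {n : ℕ} (Ω : Set (EuclideanSpace ℝ (Fin n)))
    (φ : EuclideanSpace ℝ (Fin n) → ℝ) (z : EuclideanSpace ℝ (Fin n)) : ℂ :=
  (((2 * Real.pi) ^ (-(n : ℝ) / 2) : ℝ) : ℂ) *
    ∫ x in Ω, (φ x : ℂ) * Complex.exp (Complex.I * ((inner ℝ x z : ℝ) : ℂ))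

open Complex

private lemma pyth {α : Type*} [MeasurableSpace α] (μ : Measure α) [IsFiniteMeasure μ]
    {k : ℕ} (φ : Fin k → α → ℝ) (hm : ∀ j, AEStronglyMeasurable (φ j) μ)
    (hsq : ∀ j, Integrable (fun x => φ j x ^ 2) μ)
    (hortho : ∀ i j, ∫ x, φ i x * φ j x ∂μ = if i = j then (1 : ℝ) else 0)
    (e : α → ℂ) (he : ∀ x, ‖e x‖ = 1) (hem : AEStronglyMeasurable e μ) :
    ∫ x, ‖e x - ∑ j, (φ j x : ℂ) * (∫ y, (φ j y : ℂ) * e y ∂μ)‖ ^ 2 ∂μ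
      = (μ Set.univ).toReal - ∑ j, ‖∫ y, (φ j y : ℂ) * e y ∂μ‖ ^ 2 := by
  set c : Fin k → ℂ := fun j => ∫ y, (φ j y : ℂ) * e y ∂μ with hc
  set s : α → ℂ := fun x => ∑ j, (φ j x : ℂ) * c j with hs
  have hL2 : ∀ j, MemLp (φ j) 2 μ := fun j => (memLp_two_iff_integrable_sq (hm j)).2 (hsq j)
  have hφint : ∀ j, Integrable (φ j) μ := fun j => (hL2 j).integrable one_le_two
  have hφC : ∀ j, Integrable (fun x => (φ j x : ℂ)) μ := fun j => (hφint j).ofReal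
  have hφe : ∀ j, Integrable (fun x => (φ j x : ℂ) * e x) μ := fun j =>
    ((hφC j).bdd_mul hem (c := 1) (Filter.Eventually.of_forall fun x => (he x).le)).congr
      (Filter.Eventually.of_forall fun x => mul_comm (e x) ((φ j x : ℂ)))
  have hemc : AEStronglyMeasurable (fun x => (starRingEnd ℂ) (e x)) μ :=
    RCLike.continuous_conj.comp_aestronglyMeasurable hem
  have hφec : ∀ j, Integrable (fun x => (φ j x : ℂ) * (starRingEnd ℂ) (e x)) μ := fun j =>
    ((hφC j).bdd_mul hemc (c := 1) (Filter.Eventually.of_forall fun x => by simpa using (he x).le)).congr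
      (Filter.Eventually.of_forall fun x => mul_comm _ _)
  have hφφ : ∀ i j, Integrable (fun x => φ i x * φ j x) μ := fun i j =>
    ((hsq i).add (hsq j)).mono' ((hm i).mul (hm j))
      (Filter.Eventually.of_forall fun x => by
        simp only [Pi.add_apply]
        rw [Real.norm_eq_abs, abs_mul]
        nlinarith [sq_nonneg (|φ i x| - |φ j x|), _root_.sq_abs (φ i x), _root_.sq_abs (φ j x),
          abs_nonneg (φ i x), abs_nonneg (φ j x)])
  have hφφC : ∀ i j, Integrable (fun x => (φ i x : ℂ) * (φ j x : ℂ)) μ := fun i j =>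
    ((hφφ i j).ofReal).congr (Filter.Eventually.of_forall fun x => by norm_cast)
  -- pieces
  set A : α → ℂ := fun x => ∑ j, (starRingEnd ℂ) (c j) * ((φ j x : ℂ) * e x) with hA
  set B : α → ℂ := fun x => ∑ j, c j * ((φ j x : ℂ) * (starRingEnd ℂ) (e x)) with hB
  set C : α → ℂ := fun x => ∑ i, ∑ j, (c i * (starRingEnd ℂ) (c j)) * ((φ i x : ℂ) * (φ j x : ℂ))
    with hC
  have hAint : Integrable A μ := integrable_finset_sum _ fun j _ => (hφe j).const_mul _
  have hBint : Integrable B μ := integrable_finset_sum _ fun j _ => (hφec j).const_mul _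
  have hCint : Integrable C μ := integrable_finset_sum _ fun i _ =>
    integrable_finset_sum _ fun j _ => (hφφC i j).const_mul _
  have hpoint : ∀ x, (e x - s x) * (starRingEnd ℂ) (e x - s x) = 1 - A x - B x + C x := by
    intro x
    have h1 : e x * (starRingEnd ℂ) (e x) = 1 := by
      rw [Complex.mul_conj]
      norm_cast
      rw [← Complex.sq_norm, he x]; norm_num
    have hconjs : (starRingEnd ℂ) (s x) = ∑ j, (φ j x : ℂ) * (starRingEnd ℂ) (c j) := by
      rw [hs, map_sum]
      exact Finset.sum_congr rfl fun j _ => by rw [map_mul, Complex.conj_ofReal]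
    have expand : (e x - s x) * (starRingEnd ℂ) (e x - s x)
        = e x * (starRingEnd ℂ) (e x) - e x * (starRingEnd ℂ) (s x)
          - s x * (starRingEnd ℂ) (e x) + s x * (starRingEnd ℂ) (s x) := by
      rw [map_sub]; ring
    have hA' : e x * (starRingEnd ℂ) (s x) = A x := by
      rw [hconjs, Finset.mul_sum, hA]
      exact Finset.sum_congr rfl fun j _ => by ring
    have hB' : s x * (starRingEnd ℂ) (e x) = B x := by
      rw [hs, hB, Finset.sum_mul]
      exact Finset.sum_congr rfl fun j _ => by ring
    have hC' : s x * (starRingEnd ℂ) (s x) = C x := by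
      rw [hconjs, hs, hC, Finset.sum_mul]
      refine Finset.sum_congr rfl fun i _ => ?_
      rw [Finset.mul_sum]
      exact Finset.sum_congr rfl fun j _ => by ring
    rw [expand, h1, hA', hB', hC']
  have hIA : ∫ x, A x ∂μ = ∑ j, (starRingEnd ℂ) (c j) * c j := by
    rw [hA, integral_finset_sum _ fun j _ => (hφe j).const_mul _]
    exact Finset.sum_congr rfl fun j _ => by rw [integral_const_mul]
  have hIB : ∫ x, B x ∂μ = ∑ j, c j * (starRingEnd ℂ) (c j) := by
    rw [hB, integral_finset_sum _ fun j _ => (hφec j).const_mul _]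
    refine Finset.sum_congr rfl fun j _ => ?_
    rw [integral_const_mul]
    congr 1
    have h4 : ∀ x, (φ j x : ℂ) * (starRingEnd ℂ) (e x) = (starRingEnd ℂ) ((φ j x : ℂ) * e x) :=
      fun x => by rw [map_mul, Complex.conj_ofReal]
    simp_rw [h4]
    rw [integral_conj]
  have hIC : ∫ x, C x ∂μ = ∑ j, c j * (starRingEnd ℂ) (c j) := by
    rw [hC, integral_finset_sum _ fun i _ => integrable_finset_sum _ fun j _ => (hφφC i j).const_mul _]
    have inner_eq : ∀ i, ∫ x, ∑ j, (c i * (starRingEnd ℂ) (c j)) * ((φ i x : ℂ) * (φ j x : ℂ)) ∂μ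
        = ∑ j, (c i * (starRingEnd ℂ) (c j)) * (if i = j then (1:ℂ) else 0) := by
      intro i
      rw [integral_finset_sum _ fun j _ => (hφφC i j).const_mul _]
      refine Finset.sum_congr rfl fun j _ => ?_
      rw [integral_const_mul]
      congr 1
      have h5 : ∀ x, (φ i x : ℂ) * (φ j x : ℂ) = ((φ i x * φ j x : ℝ) : ℂ) := fun x => by norm_cast
      simp_rw [h5]
      rw [show (∫ x, ((φ i x * φ j x : ℝ) : ℂ) ∂μ) = ((∫ x, φ i x * φ j x ∂μ : ℝ) : ℂ)
        from integral_ofReal, hortho i j]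
      split <;> norm_num
    simp_rw [inner_eq]
    refine Finset.sum_congr rfl fun i _ => ?_
    simp [Finset.sum_ite_eq]
  have hf1 : Integrable (fun x => (1 : ℂ) - A x) μ := (integrable_const 1).sub hAint
  have hf2 : Integrable (fun x => (1 : ℂ) - A x - B x) μ := hf1.sub hBint
  have hsplit : ∫ x, (e x - s x) * (starRingEnd ℂ) (e x - s x) ∂μ
      = ((μ Set.univ).toReal : ℂ) - ∑ j, ((Complex.normSq (c j) : ℝ) : ℂ) := by
    rw [integral_congr_ae (Filter.Eventually.of_forall hpoint),
      integral_add hf2 hCint, integral_sub hf1 hBint, integral_sub (integrable_const 1) hAint,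
      hIA, hIB, hIC]
    simp only [integral_const, smul_eq_mul, mul_one, measureReal_def]
    have h2 : ∀ j, c j * (starRingEnd ℂ) (c j) = ((Complex.normSq (c j) : ℝ) : ℂ) := fun j =>
      Complex.mul_conj (c j)
    have h3 : ∀ j, (starRingEnd ℂ) (c j) * c j = ((Complex.normSq (c j) : ℝ) : ℂ) := fun j => by
      rw [mul_comm]; exact Complex.mul_conj (c j)
    simp_rw [h2, h3]
    simp only [Complex.real_smul, mul_one]
    ring
  have hre : ((∫ x, ‖e x - s x‖ ^ 2 ∂μ : ℝ) : ℂ)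
      = ((μ Set.univ).toReal : ℂ) - ∑ j, ((Complex.normSq (c j) : ℝ) : ℂ) := by
    calc ((∫ x, ‖e x - s x‖ ^ 2 ∂μ : ℝ) : ℂ)
        = ∫ x, ((‖e x - s x‖ ^ 2 : ℝ) : ℂ) ∂μ := integral_ofReal.symm
      _ = ∫ x, (e x - s x) * (starRingEnd ℂ) (e x - s x) ∂μ :=
          integral_congr_ae (Filter.Eventually.of_forall fun x => by
            show ((‖e x - s x‖ ^ 2 : ℝ) : ℂ) = (e x - s x) * (starRingEnd ℂ) (e x - s x)
            rw [Complex.mul_conj, Complex.sq_norm])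
      _ = _ := hsplit
  have hre' : (∫ x, ‖e x - s x‖ ^ 2 ∂μ) = (μ Set.univ).toReal - ∑ j, Complex.normSq (c j) := by
    have h6 := hre
    push_cast at h6
    exact_mod_cast h6
  rw [hre']
  congr 1
  exact Finset.sum_congr rfl fun j _ => by rw [← Complex.sq_norm]

private lemma exp_norm_one {t : ℝ} : ‖Complex.exp (Complex.I * (t : ℂ))‖ = 1 := by
  rw [mul_comm]
  exact Complex.norm_exp_ofReal_mul_I t

private lemma cont_exp {n : ℕ} (x : EuclideanSpace ℝ (Fin n)) :
    Continuous fun z : EuclideanSpace ℝ (Fin n) =>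
      Complex.exp (Complex.I * ((inner ℝ x z : ℝ) : ℂ)) :=
  Complex.continuous_exp.comp (continuous_const.mul
    (Complex.continuous_ofReal.comp (continuous_const.inner continuous_id)))

private lemma cont_exp' {n : ℕ} (z : EuclideanSpace ℝ (Fin n)) :
    Continuous fun x : EuclideanSpace ℝ (Fin n) =>
      Complex.exp (Complex.I * ((inner ℝ x z : ℝ) : ℂ)) :=
  Complex.continuous_exp.comp (continuous_const.mul
    (Complex.continuous_ofReal.comp (continuous_id.inner continuous_const)))

private lemma cont_aux {n : ℕ} (Ω : Set (EuclideanSpace ℝ (Fin n)))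
    (φ : EuclideanSpace ℝ (Fin n) → ℝ)
    (hint : Integrable (fun x => (φ x : ℂ)) (volume.restrict Ω)) :
    Continuous fun z => ∫ x in Ω, (φ x : ℂ) * Complex.exp (Complex.I * ((inner ℝ x z : ℝ) : ℂ)) := by
  apply continuous_of_dominated (bound := fun x => ‖(φ x : ℂ)‖)
  · intro z
    exact hint.aestronglyMeasurable.mul (cont_exp' z).aestronglyMeasurable
  · intro z
    filter_upwards with x
    rw [norm_mul, exp_norm_one, mul_one]
  · exact hint.norm
  · filter_upwards with x
    exact continuous_const.mul (cont_exp x)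

private lemma fourierOn_cont {n : ℕ} (Ω : Set (EuclideanSpace ℝ (Fin n)))
    (φ : EuclideanSpace ℝ (Fin n) → ℝ)
    (hint : Integrable (fun x => (φ x : ℂ)) (volume.restrict Ω)) :
    Continuous fun z => fourierOn Ω φ z :=
  continuous_const.mul (cont_aux Ω φ hint)

private lemma fourierOn_neg {n : ℕ} (Ω : Set (EuclideanSpace ℝ (Fin n)))
    (φ : EuclideanSpace ℝ (Fin n) → ℝ) (z : EuclideanSpace ℝ (Fin n)) :
    fourierOn Ω φ (-z) = (starRingEnd ℂ) (fourierOn Ω φ z) := by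
  unfold fourierOn
  rw [map_mul, ← integral_conj, Complex.conj_ofReal]
  congr 1
  refine integral_congr_ae (Filter.Eventually.of_forall fun x => ?_)
  show (φ x : ℂ) * Complex.exp (Complex.I * ((inner ℝ x (-z) : ℝ) : ℂ))
      = (starRingEnd ℂ) ((φ x : ℂ) * Complex.exp (Complex.I * ((inner ℝ x z : ℝ) : ℂ)))
  rw [map_mul, Complex.conj_ofReal, ← Complex.exp_conj, map_mul, Complex.conj_ofReal,
    Complex.conj_I, inner_neg_right]
  push_cast
  ring_nf
/-- For an orthonormal set `φ_1, …, φ_k` in `L²(Ω)` (extended by zero), the projection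
remainder `ρ(z,y) = e^{iy·z} - (2π)^{n/2} ∑_j φ_j(y) conj(φ̂_j(-z))` satisfies
`∫_{B_r}∫_Ω |ρ|² = ω_n|Ω|rⁿ - (2π)ⁿ ∑_j ∫_{B_r} |φ̂_j|²` for every `r > 0`. -/
theorem projection_remainder_norm_sq
    (n k : ℕ) (hn : 0 < n)
    (Ω : Set (EuclideanSpace ℝ (Fin n))) (hΩmeas : MeasurableSet Ω)
    (hΩbdd : Bornology.IsBounded Ω) (hΩne : Ω.Nonempty)
    (φ : Fin k → EuclideanSpace ℝ (Fin n) → ℝ)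
    (hmeas : ∀ j, Measurable (φ j))
    (hortho : ∀ i j, ∫ x in Ω, φ i x * φ j x = if i = j then (1 : ℝ) else 0)
    (r : ℝ) (hr : 0 < r) :
    (∫ z in Metric.ball (0 : EuclideanSpace ℝ (Fin n)) r, ∫ y in Ω,
        ‖Complex.exp (Complex.I * ((inner ℝ y z : ℝ) : ℂ)) -
          (((2 * Real.pi) ^ ((n : ℝ) / 2) : ℝ) : ℂ) *
            ∑ j, (φ j y : ℂ) * (starRingEnd ℂ) (fourierOn Ω (φ j) (-z))‖ ^ 2) =
      (volume (Metric.ball (0 : EuclideanSpace ℝ (Fin n)) 1)).toReal *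
        (volume Ω).toReal * r ^ n -
      (2 * Real.pi) ^ n * ∑ j, ∫ z in Metric.ball (0 : EuclideanSpace ℝ (Fin n)) r,
        ‖fourierOn Ω (φ j) z‖ ^ 2 := by
  have h2π : (0 : ℝ) < 2 * Real.pi := by positivity
  haveI : Nonempty (Fin n) := ⟨⟨0, hn⟩⟩
  haveI : IsFiniteMeasure (volume.restrict Ω) :=
    ⟨by rw [Measure.restrict_apply_univ]; exact hΩbdd.measure_lt_top⟩
  have hsq : ∀ j, Integrable (fun x => φ j x ^ 2) (volume.restrict Ω) := by
    intro j
    by_contra h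
    have h1 := hortho j j
    simp only [if_pos rfl] at h1
    have h2 : (∫ x in Ω, φ j x * φ j x) = ∫ x in Ω, φ j x ^ 2 :=
      integral_congr_ae (Filter.Eventually.of_forall fun x => by ring)
    rw [h2, integral_undef h] at h1
    norm_num at h1
  have hm : ∀ j, AEStronglyMeasurable (φ j) (volume.restrict Ω) :=
    fun j => (hmeas j).aestronglyMeasurable
  have hφint : ∀ j, Integrable (fun x => (φ j x : ℂ)) (volume.restrict Ω) := fun j =>
    (((memLp_two_iff_integrable_sq (hm j)).2 (hsq j)).integrable one_le_two).ofReal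
  have hK : (((2 * Real.pi) ^ ((n : ℝ) / 2) : ℝ) : ℂ)
      * (((2 * Real.pi) ^ (-(n : ℝ) / 2) : ℝ) : ℂ) = 1 := by
    rw [← Complex.ofReal_mul, ← Real.rpow_add h2π,
      show (n : ℝ) / 2 + -(n : ℝ) / 2 = 0 by ring, Real.rpow_zero, Complex.ofReal_one]
  have hKc : ∀ j z, (((2 * Real.pi) ^ ((n : ℝ) / 2) : ℝ) : ℂ) * fourierOn Ω (φ j) z
      = ∫ x in Ω, (φ j x : ℂ) * Complex.exp (Complex.I * ((inner ℝ x z : ℝ) : ℂ)) := by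
    intro j z
    unfold fourierOn
    rw [← mul_assoc, hK, one_mul]
  have hK2 : ((2 * Real.pi) ^ ((n : ℝ) / 2)) ^ (2 : ℕ) = (2 * Real.pi) ^ n := by
    rw [← Real.rpow_natCast ((2 * Real.pi) ^ ((n : ℝ) / 2)) 2, ← Real.rpow_mul h2π.le,
      show (n : ℝ) / 2 * (2 : ℕ) = (n : ℝ) by push_cast; ring, Real.rpow_natCast]
  have hnorm : ∀ j z,
      ‖∫ x in Ω, (φ j x : ℂ) * Complex.exp (Complex.I * ((inner ℝ x z : ℝ) : ℂ))‖ ^ 2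
        = (2 * Real.pi) ^ n * ‖fourierOn Ω (φ j) z‖ ^ 2 := by
    intro j z
    rw [← hKc j z, norm_mul, mul_pow, Complex.norm_real, Real.norm_eq_abs,
      abs_of_pos (Real.rpow_pos_of_pos h2π _), hK2]
  have hinner : ∀ z, (∫ y in Ω,
      ‖Complex.exp (Complex.I * ((inner ℝ y z : ℝ) : ℂ)) -
        (((2 * Real.pi) ^ ((n : ℝ) / 2) : ℝ) : ℂ) *
          ∑ j, (φ j y : ℂ) * (starRingEnd ℂ) (fourierOn Ω (φ j) (-z))‖ ^ 2)
      = (volume Ω).toReal - (2 * Real.pi) ^ n * ∑ j, ‖fourierOn Ω (φ j) z‖ ^ 2 := by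
    intro z
    have hpt : ∀ y : EuclideanSpace ℝ (Fin n),
        (((2 * Real.pi) ^ ((n : ℝ) / 2) : ℝ) : ℂ) *
          ∑ j, (φ j y : ℂ) * (starRingEnd ℂ) (fourierOn Ω (φ j) (-z))
        = ∑ j, (φ j y : ℂ) *
            ∫ x in Ω, (φ j x : ℂ) * Complex.exp (Complex.I * ((inner ℝ x z : ℝ) : ℂ)) := by
      intro y
      rw [Finset.mul_sum]
      refine Finset.sum_congr rfl fun j _ => ?_
      rw [fourierOn_neg, Complex.conj_conj, ← hKc j z]
      ring
    simp_rw [hpt]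
    have hp := pyth (volume.restrict Ω) φ hm hsq hortho
      (fun y => Complex.exp (Complex.I * ((inner ℝ y z : ℝ) : ℂ)))
      (fun y => exp_norm_one) (cont_exp' z).aestronglyMeasurable
    beta_reduce at hp
    rw [hp, Measure.restrict_apply_univ]
    congr 1
    rw [Finset.mul_sum]
    exact Finset.sum_congr rfl fun j _ => hnorm j z
  have hstep : (∫ z in Metric.ball (0 : EuclideanSpace ℝ (Fin n)) r, ∫ y in Ω,
      ‖Complex.exp (Complex.I * ((inner ℝ y z : ℝ) : ℂ)) -
        (((2 * Real.pi) ^ ((n : ℝ) / 2) : ℝ) : ℂ) *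
          ∑ j, (φ j y : ℂ) * (starRingEnd ℂ) (fourierOn Ω (φ j) (-z))‖ ^ 2)
      = ∫ z in Metric.ball (0 : EuclideanSpace ℝ (Fin n)) r,
          ((volume Ω).toReal - (2 * Real.pi) ^ n * ∑ j, ‖fourierOn Ω (φ j) z‖ ^ 2) :=
    integral_congr_ae (Filter.Eventually.of_forall fun z => hinner z)
  rw [hstep]
  have hg : ∀ j, IntegrableOn (fun z => ‖fourierOn Ω (φ j) z‖ ^ 2)
      (Metric.ball (0 : EuclideanSpace ℝ (Fin n)) r) := by
    intro j
    have hcont : Continuous fun z => ‖fourierOn Ω (φ j) z‖ ^ 2 :=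
      ((fourierOn_cont Ω (φ j) (hφint j)).norm).pow 2
    exact (hcont.locallyIntegrable.integrableOn_isCompact
      (isCompact_closedBall _ _)).mono_set Metric.ball_subset_closedBall
  have hsum_int : IntegrableOn
      (fun z => (2 * Real.pi) ^ n * ∑ j, ‖fourierOn Ω (φ j) z‖ ^ 2)
      (Metric.ball (0 : EuclideanSpace ℝ (Fin n)) r) :=
    (integrable_finset_sum _ fun j _ => hg j).const_mul _
  rw [integral_sub (integrableOn_const (μ := volume) (s := Metric.ball (0 : EuclideanSpace ℝ (Fin n)) r)
    (C := (volume Ω).toReal) measure_ball_lt_top.ne) hsum_int,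
    setIntegral_const, integral_const_mul,
    integral_finset_sum _ fun j _ => hg j]
  have hvol := Measure.addHaar_ball (volume : Measure (EuclideanSpace ℝ (Fin n))) 0 hr.le
  rw [finrank_euclideanSpace_fin] at hvol
  rw [measureReal_def, hvol, ENNReal.toReal_mul, ENNReal.toReal_ofReal (by positivity), smul_eq_mul]
  ring
end
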